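/- Let f(t), b(t) ∈ ℤ_d[[t]] be power series with f(0) a unit. The automorphism τ_{f,b} is finite state (the set of its states at all vertices of the tree is finite) if and only if both f(t) and b(t) are rational power series, i.e. there exist polynomials p, q, r, s ∈ ℤ_d[t] with q(0) and s(0) units such that f·q = p and b·s = r. -/

import Mathlib

/-- The affine transformation `τ_{f,b}` of `ℤ_d[[t]]`, `g ↦ b + g·f`, viewed as a
transformation of `ℤ_d^∞` via coefficient sequences. -/
noncomputable def tauMap (d : ℕ) (f b : PowerSeries (ZMod d)) (g : ℕ → ZMod d) :
    ℕ → ZMod d :=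
  fun n => PowerSeries.coeff (R := ZMod d) n (b + (PowerSeries.mk g) * f)

/-- The sequence in `ℤ_d^∞` whose first entry is `u` and whose tail is `w`. -/
def consSeq (d : ℕ) (u : ZMod d) (w : ℕ → ZMod d) : ℕ → ZMod d :=
  fun n => match n with
  | 0 => u
  | k + 1 => w k

/-- The state `g|_u` of a transformation of the boundary `ℤ_d^∞` at a first-level
vertex `u`: `g|_u(w)` is the tail of `g(uw)`. -/
def stateMap (d : ℕ) (g : (ℕ → ZMod d) → ℕ → ZMod d) (u : ZMod d) :
    (ℕ → ZMod d) → ℕ → ZMod d :=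
  fun w n => g (consSeq d u w) (n + 1)

/-- The state `g|_v` at a vertex `v` of the tree (a finite word over `ℤ/dℤ`). -/
def stateWord (d : ℕ) (g : (ℕ → ZMod d) → ℕ → ZMod d) :
    List (ZMod d) → (ℕ → ZMod d) → ℕ → ZMod d
  | [] => g
  | u :: v => stateWord d (stateMap d g u) v

/-- `g` is finite state: the set of its states at all vertices of the tree is finite. -/
def FiniteState (d : ℕ) (g : (ℕ → ZMod d) → ℕ → ZMod d) : Prop :=
  {h | ∃ v : List (ZMod d), h = stateWord d g v}.Finite

/-- A power series is rational: it becomes a polynomial after multiplication by a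
polynomial with invertible constant term. -/
def IsRational (d : ℕ) (f : PowerSeries (ZMod d)) : Prop :=
  ∃ p q : Polynomial (ZMod d), IsUnit (q.coeff 0) ∧
    f * (q : PowerSeries (ZMod d)) = (p : PowerSeries (ZMod d))


open PowerSeries

variable {d : ℕ}

/-- Left shift of a power series: drop the constant coefficient. -/
noncomputable def shiftS (g : PowerSeries (ZMod d)) : PowerSeries (ZMod d) :=
  PowerSeries.mk fun n => PowerSeries.coeff (R := ZMod d) (n + 1) g

@[simp] lemma coeff_shiftS (g : PowerSeries (ZMod d)) (n : ℕ) :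
    PowerSeries.coeff (R := ZMod d) n (shiftS g) = PowerSeries.coeff (R := ZMod d) (n + 1) g := by
  simp [shiftS]

lemma coeff_shiftS_iter (k : ℕ) (g : PowerSeries (ZMod d)) (n : ℕ) :
    PowerSeries.coeff (R := ZMod d) n (shiftS^[k] g) = PowerSeries.coeff (R := ZMod d) (n + k) g := by
  induction k generalizing g n with
  | zero => simp
  | succ k ih =>
    rw [Function.iterate_succ_apply, ih, coeff_shiftS]
    ring_nf

lemma mk_consSeq (u : ZMod d) (w : ℕ → ZMod d) :
    PowerSeries.mk (consSeq d u w) = PowerSeries.C (R := ZMod d) u + PowerSeries.X * PowerSeries.mk w := by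
  ext n
  cases n with
  | zero => simp [consSeq, PowerSeries.coeff_zero_eq_constantCoeff]
  | succ k => simp [consSeq, PowerSeries.coeff_succ_X_mul, PowerSeries.coeff_C]

lemma stateMap_tauMap (f b : PowerSeries (ZMod d)) (u : ZMod d) :
    stateMap d (tauMap d f b) u = tauMap d f (shiftS (b + PowerSeries.C (R := ZMod d) u * f)) := by
  funext w n
  simp only [stateMap, tauMap, mk_consSeq]
  have : b + (PowerSeries.C (R := ZMod d) u + PowerSeries.X * PowerSeries.mk w) * f
      = (b + PowerSeries.C (R := ZMod d) u * f) + PowerSeries.X * (PowerSeries.mk w * f) := by ring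
  rw [this, map_add, map_add, PowerSeries.coeff_succ_X_mul]
  rw [map_add, coeff_shiftS, map_add]

noncomputable def Bw (f : PowerSeries (ZMod d)) :
    PowerSeries (ZMod d) → List (ZMod d) → PowerSeries (ZMod d)
  | b, [] => b
  | b, u :: v => Bw f (shiftS (b + PowerSeries.C (R := ZMod d) u * f)) v

lemma stateWord_tauMap (f : PowerSeries (ZMod d)) (v : List (ZMod d)) (b : PowerSeries (ZMod d)) :
    stateWord d (tauMap d f b) v = tauMap d f (Bw f b v) := by
  induction v generalizing b with
  | nil => rfl
  | cons u v ih =>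
    show stateWord d (stateMap d (tauMap d f b) u) v = _
    rw [stateMap_tauMap, ih]
    rfl

lemma mk_zero_fun : (PowerSeries.mk (fun _ => (0 : ZMod d))) = 0 := by
  ext n; simp

lemma tauMap_eval_zero (f c : PowerSeries (ZMod d)) :
    PowerSeries.mk (tauMap d f c (fun _ => 0)) = c := by
  ext n; simp [tauMap, mk_zero_fun]

lemma finiteState_iff (f b : PowerSeries (ZMod d)) :
    FiniteState d (tauMap d f b) ↔ {c | ∃ v : List (ZMod d), c = Bw f b v}.Finite := by
  have hset : {h | ∃ v : List (ZMod d), h = stateWord d (tauMap d f b) v}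
      = (tauMap d f) '' {c | ∃ v : List (ZMod d), c = Bw f b v} := by
    ext h
    constructor
    · rintro ⟨v, rfl⟩
      exact ⟨Bw f b v, ⟨v, rfl⟩, (stateWord_tauMap f v b).symm⟩
    · rintro ⟨c, ⟨v, rfl⟩, rfl⟩
      exact ⟨v, (stateWord_tauMap f v b).symm⟩
  constructor
  · intro hfin
    rw [FiniteState, hset] at hfin
    have : {c | ∃ v : List (ZMod d), c = Bw f b v}
        = (fun h : (ℕ → ZMod d) → ℕ → ZMod d => PowerSeries.mk (h (fun _ => 0))) ''
          ((tauMap d f) '' {c | ∃ v : List (ZMod d), c = Bw f b v}) := by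
      rw [Set.image_image]
      ext c
      simp only [Set.mem_image, Set.mem_setOf_eq, tauMap_eval_zero]
      constructor
      · intro h; exact ⟨c, h, rfl⟩
      · rintro ⟨x, hx, rfl⟩; exact hx
    rw [this]
    exact hfin.image _
  · intro hfin
    rw [FiniteState, hset]
    exact hfin.image _

lemma trunc_add_shift (k : ℕ) (g : PowerSeries (ZMod d)) :
    ((PowerSeries.trunc k g : Polynomial (ZMod d)) : PowerSeries (ZMod d))
      + PowerSeries.X ^ k * shiftS^[k] g = g := by
  ext n
  rw [map_add, Polynomial.coeff_coe, PowerSeries.coeff_trunc, PowerSeries.coeff_X_pow_mul']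
  by_cases h : n < k
  · rw [if_pos h, if_neg (by omega)]
    simp
  · rw [if_neg h, if_pos (by omega), coeff_shiftS_iter]
    rw [Nat.sub_add_cancel (by omega)]
    simp

lemma isRational_of_iterate_shift {k : ℕ} {g : PowerSeries (ZMod d)}
    (h : IsRational d (shiftS^[k] g)) : IsRational d g := by
  obtain ⟨p, q, hq, hpq⟩ := h
  refine ⟨PowerSeries.trunc k g * q + Polynomial.X ^ k * p, q, hq, ?_⟩
  have := trunc_add_shift k g
  push_cast
  calc g * (q : PowerSeries (ZMod d))
      = (((PowerSeries.trunc k g : Polynomial (ZMod d)) : PowerSeries (ZMod d))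
        + PowerSeries.X ^ k * shiftS^[k] g) * (q : PowerSeries (ZMod d)) := by rw [this]
    _ = ((PowerSeries.trunc k g : Polynomial (ZMod d)) : PowerSeries (ZMod d)) * (q : PowerSeries (ZMod d))
        + PowerSeries.X ^ k * (shiftS^[k] g * (q : PowerSeries (ZMod d))) := by ring
    _ = _ := by rw [hpq]

lemma isRational_of_fixed {k : ℕ} (hk : 1 ≤ k) {c : PowerSeries (ZMod d)}
    (h : shiftS^[k] c = c) : IsRational d c := by
  refine ⟨PowerSeries.trunc k c, 1 - Polynomial.X ^ k, ?_, ?_⟩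
  · have : (1 - Polynomial.X ^ k : Polynomial (ZMod d)).coeff 0 = 1 := by
      simp [Polynomial.coeff_one, Polynomial.coeff_X_pow, (by omega : ¬ (0 = k))]
      omega
    rw [this]; exact isUnit_one
  · have := trunc_add_shift k c
    rw [h] at this
    push_cast
    linear_combination -this

lemma isRational_sub {a c : PowerSeries (ZMod d)} (ha : IsRational d a)
    (hc : IsRational d c) : IsRational d (a - c) := by
  obtain ⟨p, q, hq, hpq⟩ := ha
  obtain ⟨r, s, hs, hrs⟩ := hc
  refine ⟨p * s - r * q, q * s, ?_, ?_⟩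
  · rw [Polynomial.mul_coeff_zero]; exact hq.mul hs
  · push_cast
    linear_combination (s : PowerSeries (ZMod d)) * hpq - (q : PowerSeries (ZMod d)) * hrs

lemma pigeonhole {S : Set (PowerSeries (ZMod d))} (hS : S.Finite)
    (F : ℕ → PowerSeries (ZMod d)) (hF : ∀ n, F n ∈ S) :
    ∃ n m, n < m ∧ F n = F m := by
  have : ¬ Function.Injective F := by
    intro hinj
    exact (Set.infinite_range_of_injective hinj) (hS.subset (Set.range_subset_iff.mpr hF))
  rw [Function.not_injective_iff] at this
  obtain ⟨x, y, hxy, hne⟩ := this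
  rcases lt_or_gt_of_ne hne with h | h
  · exact ⟨x, y, h, hxy⟩
  · exact ⟨y, x, h, hxy.symm⟩

lemma isRational_of_shift_pigeonhole {c : PowerSeries (ZMod d)}
    {n m : ℕ} (hnm : n < m) (h : shiftS^[n] c = shiftS^[m] c) : IsRational d c := by
  apply isRational_of_iterate_shift (k := n)
  apply isRational_of_fixed (k := m - n) (by omega)
  rw [← Function.iterate_add_apply, Nat.sub_add_cancel (by omega)]
  exact h.symm

lemma Bw_replicate (f b : PowerSeries (ZMod d)) (n : ℕ) :
    Bw f b (List.replicate n 0) = shiftS^[n] b := by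
  induction n generalizing b with
  | zero => rfl
  | succ n ih =>
    rw [List.replicate_succ]
    show Bw f (shiftS (b + PowerSeries.C (R := ZMod d) 0 * f)) (List.replicate n 0) = _
    rw [ih, map_zero, zero_mul, add_zero, Function.iterate_succ_apply]

lemma Bw_one_replicate (f b : PowerSeries (ZMod d)) (n : ℕ) :
    Bw f b ((1 : ZMod d) :: List.replicate n 0) = shiftS^[n + 1] (b + f) := by
  show Bw f (shiftS (b + PowerSeries.C (R := ZMod d) 1 * f)) (List.replicate n 0) = _
  rw [Bw_replicate, map_one, one_mul, Function.iterate_succ_apply]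

lemma forward_dir (f b : PowerSeries (ZMod d))
    (hfin : FiniteState d (tauMap d f b)) : IsRational d f ∧ IsRational d b := by
  rw [finiteState_iff] at hfin
  have hb : IsRational d b := by
    obtain ⟨n, m, hnm, he⟩ := pigeonhole hfin (fun n => shiftS^[n] b)
      (fun n => ⟨List.replicate n 0, (Bw_replicate f b n).symm⟩)
    exact isRational_of_shift_pigeonhole hnm he
  have hbf : IsRational d (b + f) := by
    obtain ⟨n, m, hnm, he⟩ := pigeonhole hfin (fun n => shiftS^[n + 1] (b + f))
      (fun n => ⟨(1 : ZMod d) :: List.replicate n 0, (Bw_one_replicate f b n).symm⟩)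
    exact isRational_of_shift_pigeonhole (by omega : n + 1 < m + 1) he
  refine ⟨?_, hb⟩
  have := isRational_sub hbf hb
  simpa using this

lemma X_mul_shiftS (g : PowerSeries (ZMod d)) :
    PowerSeries.X * shiftS g = g - PowerSeries.C (R := ZMod d) (PowerSeries.constantCoeff (R := ZMod d) g) := by
  ext n
  cases n with
  | zero => simp
  | succ k => simp [PowerSeries.coeff_succ_X_mul, PowerSeries.coeff_C]

lemma X_cancel {a c : PowerSeries (ZMod d)}
    (h : PowerSeries.X * a = PowerSeries.X * c) : a = c := by
  ext n
  have := congrArg (PowerSeries.coeff (R := ZMod d) (n + 1)) h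
  rwa [PowerSeries.coeff_succ_X_mul, PowerSeries.coeff_succ_X_mul] at this

lemma poly_bounded_finite (hd : 2 ≤ d) (K : ℕ) :
    {N : Polynomial (ZMod d) | N.natDegree ≤ K}.Finite := by
  haveI : NeZero d := ⟨by omega⟩
  have hinj : Set.InjOn (fun N : Polynomial (ZMod d) => fun i : Fin (K + 1) => N.coeff i)
      {N : Polynomial (ZMod d) | N.natDegree ≤ K} := by
    intro N hN M hM h
    ext j
    by_cases hj : j ≤ K
    · exact congrFun h ⟨j, by omega⟩
    · rw [Polynomial.coeff_eq_zero_of_natDegree_lt (by simp at hN; omega),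
        Polynomial.coeff_eq_zero_of_natDegree_lt (by simp at hM; omega)]
  exact Set.Finite.of_finite_image (Set.toFinite _) hinj

lemma backward_dir (hd : 2 ≤ d) (f b : PowerSeries (ZMod d))
    (hrf : IsRational d f) (hrb : IsRational d b) :
    FiniteState d (tauMap d f b) := by
  obtain ⟨p, q, hq, hfq⟩ := hrf
  obtain ⟨r, s, hs, hbs⟩ := hrb
  set D : Polynomial (ZMod d) := q * s with hD
  set P : Polynomial (ZMod d) := p * s with hP
  have hfD : f * (D : PowerSeries (ZMod d)) = (P : PowerSeries (ZMod d)) := by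
    rw [hD, hP]
    push_cast
    calc f * ((q : PowerSeries (ZMod d)) * s) = (f * q) * s := by ring
      _ = (p : PowerSeries (ZMod d)) * s := by rw [hfq]
  have hbD : b * (D : PowerSeries (ZMod d)) = ((r * q : Polynomial (ZMod d)) : PowerSeries (ZMod d)) := by
    rw [hD]
    push_cast
    calc b * ((q : PowerSeries (ZMod d)) * s) = (b * s) * q := by ring
      _ = (r : PowerSeries (ZMod d)) * q := by rw [hbs]
  set K : ℕ := max (max P.natDegree (r * q).natDegree) D.natDegree with hK
  set T : Set (PowerSeries (ZMod d)) :=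
    {c | ∃ N : Polynomial (ZMod d), N.natDegree ≤ K ∧
      c * (D : PowerSeries (ZMod d)) = (N : PowerSeries (ZMod d))} with hT
  -- T is finite
  have hDunit : IsUnit ((D : PowerSeries (ZMod d))) := by
    rw [PowerSeries.isUnit_iff_constantCoeff]
    have : PowerSeries.constantCoeff (R := ZMod d) (D : PowerSeries (ZMod d)) = D.coeff 0 := by
      rw [← Polynomial.coeff_coe, PowerSeries.coeff_zero_eq_constantCoeff]
    rw [this, hD, Polynomial.mul_coeff_zero]
    exact hq.mul hs
  obtain ⟨uD, huD⟩ := hDunit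
  have hTfin : T.Finite := by
    apply Set.Finite.subset (((poly_bounded_finite hd K).image
      (fun N : Polynomial (ZMod d) => (N : PowerSeries (ZMod d)) * (↑uD⁻¹ : PowerSeries (ZMod d)))))
    rintro c ⟨N, hNdeg, hNc⟩
    refine ⟨N, hNdeg, ?_⟩
    show (N : PowerSeries (ZMod d)) * (↑uD⁻¹ : PowerSeries (ZMod d)) = c
    rw [← hNc, ← huD, mul_assoc, Units.mul_inv, mul_one]
  -- T is closed under the step
  have hstep : ∀ c ∈ T, ∀ u : ZMod d, shiftS (c + PowerSeries.C (R := ZMod d) u * f) ∈ T := by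
    rintro c ⟨N, hNdeg, hNc⟩ u
    set g : PowerSeries (ZMod d) := c + PowerSeries.C (R := ZMod d) u * f with hg
    set c0 : ZMod d := PowerSeries.constantCoeff (R := ZMod d) g with hc0
    set M : Polynomial (ZMod d) := N + Polynomial.C u * P - Polynomial.C c0 * D with hM
    have hgD : g * (D : PowerSeries (ZMod d))
        = ((N + Polynomial.C u * P : Polynomial (ZMod d)) : PowerSeries (ZMod d)) := by
      rw [hg, add_mul, hNc, mul_assoc, hfD]
      push_cast
      ring
    have hMcoeff0 : M.coeff 0 = 0 := by
      have h0 : c0 * D.coeff 0 = (N + Polynomial.C u * P).coeff 0 := by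
        have := congrArg (PowerSeries.coeff (R := ZMod d) 0) hgD
        rw [Polynomial.coeff_coe] at this
        rw [← this]
        simp [PowerSeries.coeff_zero_eq_constantCoeff, ← hc0]
      simp only [hM, Polynomial.coeff_sub, Polynomial.coeff_mul_C, Polynomial.mul_coeff_zero,
        Polynomial.coeff_C_mul, Polynomial.coeff_C_zero]
      rw [← h0]
      ring
    refine ⟨M.divX, le_trans (Polynomial.natDegree_divX_le (p := M)) ?_, ?_⟩
    · calc M.natDegree ≤ max (N + Polynomial.C u * P).natDegree (Polynomial.C c0 * D).natDegree :=
          Polynomial.natDegree_sub_le _ _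
        _ ≤ K := by
          apply max_le
          · apply le_trans (Polynomial.natDegree_add_le _ _)
            apply max_le (le_trans hNdeg (le_refl K))
            exact le_trans (Polynomial.natDegree_C_mul_le _ _) (le_trans (le_max_left _ _) (le_max_left _ _))
          · exact le_trans (Polynomial.natDegree_C_mul_le _ _) (le_max_right _ _)
    · apply X_cancel
      rw [← mul_assoc, X_mul_shiftS, ← hc0, sub_mul, hgD]
      have hMX : (M : PowerSeries (ZMod d)) = PowerSeries.X * (M.divX : PowerSeries (ZMod d)) := by
        conv_lhs => rw [← Polynomial.X_mul_divX_add M]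
        rw [hMcoeff0]
        push_cast
        rw [map_zero, add_zero]
      rw [← hMX, hM]
      push_cast
      ring
  -- membership of b and closure along words
  have hbT : b ∈ T := ⟨r * q, by omega, hbD⟩
  have hBw : ∀ (v : List (ZMod d)) (c : PowerSeries (ZMod d)), c ∈ T → Bw f c v ∈ T := by
    intro v
    induction v with
    | nil => intro c hc; exact hc
    | cons u v ih =>
      intro c hc
      show Bw f (shiftS (c + PowerSeries.C (R := ZMod d) u * f)) v ∈ T
      exact ih _ (hstep c hc u)
  rw [finiteState_iff]
  apply hTfin.subset
  rintro c ⟨v, rfl⟩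
  exact hBw v b hbT

/-- For `f, b ∈ ℤ_d[[t]]` with `f(0)` a unit, the automorphism `τ_{f,b}` is finite state
if and only if both `f` and `b` are rational power series. -/
theorem stmt_7 (d : ℕ) (hd : 2 ≤ d) (f b : PowerSeries (ZMod d))
    (hf : IsUnit (PowerSeries.constantCoeff (R := ZMod d) f)) :
    FiniteState d (tauMap d f b) ↔ (IsRational d f ∧ IsRational d b) := by
  constructor
  · exact forward_dir f b
  · rintro ⟨h1, h2⟩
    exact backward_dir hd f b h1 h2
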